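/- Let 0 ≤ β < α < 1. For a configuration of k values equal to β and N−1−k values equal to α arranged on the cycle Z_{N−1}, the quantity S̃_N = ∑_{d=1}^{N−1} ∑_{i=1}^{N−1} (β/α)^{n_i^{(d)}} · α^d (where n_i^{(d)} is the number of β's in the cyclic interval [i, i+d−1]) is minimized over all such configurations by placing the β's at positions ⌊i·(N−1)/k⌋, i = 1,...,k. -/

import Mathlib

open Finset

/-- number of β-positions (elements of `B`) in the cyclic interval `[i, i+d-1]` of `Z_{N-1}`. -/
def betaCount (N : ℕ) (B : Finset (ZMod (N - 1))) (i d : ℕ) : ℕ :=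
  ((Finset.range d).filter fun t => (((i + t : ℕ) : ZMod (N - 1)) ∈ B)).card

/-- the cyclic double sum `S̃_N` for the configuration `B` of β-drifts. -/
noncomputable def Stilde (N : ℕ) (α β : ℝ) (B : Finset (ZMod (N - 1))) : ℝ :=
  ∑ d ∈ Finset.Icc 1 (N - 1), ∑ i ∈ Finset.Icc 1 (N - 1),
    (β / α) ^ betaCount N B i d * α ^ d

namespace EqSp

/-- ceiling of `a * k / M` -/
def cdiv (k M a : ℕ) : ℕ := (a * k + M - 1) / M

lemma cdiv_le_iff {k M : ℕ} (hM : 1 ≤ M) (a j : ℕ) :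
    cdiv k M a ≤ j ↔ a * k ≤ j * M := by
  unfold cdiv
  rw [Nat.div_le_iff_le_mul_add_pred hM, mul_comm M j]
  omega

lemma lt_cdiv_iff {k M : ℕ} (hM : 1 ≤ M) (a j : ℕ) :
    j < cdiv k M a ↔ j * M < a * k := by
  rw [← not_le, ← not_le, cdiv_le_iff hM]

lemma cdiv_spec {k M : ℕ} (hM : 1 ≤ M) (a : ℕ) : a * k ≤ cdiv k M a * M :=
  (cdiv_le_iff hM a _).mp le_rfl

lemma cdiv_mono {k M : ℕ} (hM : 1 ≤ M) {a b : ℕ} (h : a ≤ b) :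
    cdiv k M a ≤ cdiv k M b := by
  rw [cdiv_le_iff hM]
  exact le_trans (Nat.mul_le_mul_right k h) (cdiv_spec hM b)

lemma cdiv_add_le {k M : ℕ} (hM : 1 ≤ M) (a b : ℕ) :
    cdiv k M (a + b) ≤ cdiv k M a + cdiv k M b := by
  rw [cdiv_le_iff hM, add_mul, add_mul]
  exact add_le_add (cdiv_spec hM a) (cdiv_spec hM b)

lemma cdiv_one_le {k M : ℕ} (hM : 1 ≤ M) (hkM : k ≤ M) : cdiv k M 1 ≤ 1 := by
  unfold cdiv
  rw [Nat.div_le_iff_le_mul_add_pred hM]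
  omega

lemma cdiv_succ_le {k M : ℕ} (hM : 1 ≤ M) (hkM : k ≤ M) (a : ℕ) :
    cdiv k M (a + 1) ≤ cdiv k M a + 1 :=
  le_trans (cdiv_add_le hM a 1) (by have := cdiv_one_le hM hkM; omega)

lemma le_cdiv {k M : ℕ} (hM : 1 ≤ M) {j a : ℕ} (h : j * M ≤ a * k + M - 1) :
    j ≤ cdiv k M a := by
  unfold cdiv
  rw [Nat.le_div_iff_mul_le hM]
  exact h

lemma cdiv_mul_le {k M : ℕ} (a : ℕ) : cdiv k M a * M ≤ a * k + M - 1 :=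
  Nat.div_mul_le_self _ _

lemma le_cdiv_add {k M : ℕ} (hM : 1 ≤ M) (a d : ℕ) :
    cdiv k M a + d * k / M ≤ cdiv k M (a + d) := by
  apply le_cdiv hM
  have h1 : cdiv k M a * M ≤ a * k + M - 1 := cdiv_mul_le a
  have h2 : (d * k / M) * M ≤ d * k := Nat.div_mul_le_self _ _
  have h3 : (a + d) * k = a * k + d * k := add_mul _ _ _
  have h4 : (cdiv k M a + d * k / M) * M = cdiv k M a * M + (d * k / M) * M :=
    add_mul _ _ _
  omega

lemma cdiv_le_div_succ {k M : ℕ} (hM : 1 ≤ M) (d : ℕ) :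
    cdiv k M d ≤ d * k / M + 1 := by
  unfold cdiv
  rw [Nat.div_le_iff_le_mul_add_pred hM]
  have h1 := Nat.div_add_mod (d * k) M
  have h2 : d * k % M < M := Nat.mod_lt _ hM
  have h3 : M * (d * k / M + 1) = M * (d * k / M) + M := by ring
  omega

lemma nat_div_eq_iff {k M : ℕ} (hk : 1 ≤ k) (hM : 1 ≤ M) (j a : ℕ) :
    j * M / k = a ↔ cdiv k M a ≤ j ∧ j < cdiv k M (a + 1) := by
  rw [show (j * M / k = a) ↔ (a ≤ j * M / k ∧ j * M / k < a + 1) from by omega,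
    Nat.le_div_iff_mul_le hk, Nat.div_lt_iff_lt_mul hk,
    ← cdiv_le_iff hM, ← lt_cdiv_iff hM]

lemma cong_cases {M a b : ℕ} (hM : 1 ≤ M) (hb1 : 1 ≤ b) (hbM : b ≤ M)
    (ha1 : 1 ≤ a) (haM : a ≤ 2 * M - 1) (h : a ≡ b [MOD M]) : a = b ∨ a = b + M := by
  have h' : a % M = b % M := h
  have ha' : a / M ≤ 1 := by rw [Nat.div_le_iff_le_mul_add_pred hM]; omega
  have hb' : b / M ≤ 1 := by rw [Nat.div_le_iff_le_mul_add_pred hM]; omega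
  have e1 := Nat.div_add_mod a M
  have e2 := Nat.div_add_mod b M
  have hrb : b % M < M := Nat.mod_lt _ hM
  rcases Nat.le_one_iff_eq_zero_or_eq_one.mp ha' with h3 | h3 <;>
    rcases Nat.le_one_iff_eq_zero_or_eq_one.mp hb' with h4 | h4 <;>
      rw [h3] at e1 <;> rw [h4] at e2 <;> omega

lemma val_ge_one {k M j : ℕ} (hk : 1 ≤ k) (hkM : k ≤ M) (hj1 : 1 ≤ j) :
    1 ≤ j * M / k := by
  rw [Nat.le_div_iff_mul_le hk]
  have h1 : M ≤ j * M := Nat.le_mul_of_pos_left M hj1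
  omega

lemma val_le {k M j : ℕ} (hk : 1 ≤ k) (hjk : j ≤ k) : j * M / k ≤ M := by
  rw [Nat.div_le_iff_le_mul_add_pred hk]
  have : j * M ≤ k * M := Nat.mul_le_mul_right M hjk
  omega

lemma val_strictmono {k M j j' : ℕ} (hk : 1 ≤ k) (hkM : k ≤ M) (h : j < j') :
    j * M / k < j' * M / k := by
  have h1 : j * M + k ≤ j' * M := by
    have h2 : (j + 1) * M ≤ j' * M := Nat.mul_le_mul_right M h
    have h3 : (j + 1) * M = j * M + M := by ring
    omega
  calc j * M / k < j * M / k + 1 := Nat.lt_succ_self _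
    _ = (j * M + k) / k := (Nat.add_div_right _ hk).symm
    _ ≤ j' * M / k := Nat.div_le_div_right h1


def Bstar (N k : ℕ) : Finset (ZMod (N - 1)) :=
  (Finset.Icc 1 k).image fun i => ((i * (N - 1) / k : ℕ) : ZMod (N - 1))

lemma mem_Bstar_iff (N k : ℕ) (hN : 2 ≤ N) (hk : 1 ≤ k) (hkN : k ≤ N - 1)
    (a : ℕ) (ha1 : 1 ≤ a) (ha2 : a ≤ 2 * (N - 1) - 1) :
    ((a : ZMod (N - 1)) ∈ Bstar N k) ↔ cdiv k (N - 1) a < cdiv k (N - 1) (a + 1) := by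
  set M := N - 1 with hMdef
  have hM : 1 ≤ M := by omega
  constructor
  · intro h
    simp only [Bstar, Finset.mem_image, Finset.mem_Icc] at h
    obtain ⟨j, ⟨hj1, hjk⟩, hj⟩ := h
    have hb1 : 1 ≤ j * M / k := val_ge_one hk hkN hj1
    have hbM : j * M / k ≤ M := val_le hk hjk
    have hcong : a ≡ j * M / k [MOD M] :=
      (ZMod.natCast_eq_natCast_iff _ _ _).mp hj.symm
    have hwit : ∃ j', j' * M / k = a := by
      rcases cong_cases hM hb1 hbM ha1 ha2 hcong with h' | h'
      · exact ⟨j, h'.symm⟩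
      · refine ⟨j + k, ?_⟩
        have : (j + k) * M = j * M + k * M := by ring
        rw [this, Nat.add_mul_div_left _ _ hk, h']
    obtain ⟨j', hj'⟩ := hwit
    have h2 := (nat_div_eq_iff hk hM j' a).mp hj'
    exact lt_of_le_of_lt h2.1 h2.2
  · intro h
    set j0 := cdiv k M a with hj0def
    have hj0 : j0 * M / k = a := (nat_div_eq_iff hk hM j0 a).mpr ⟨le_rfl, h⟩
    have hj01 : 1 ≤ j0 := by
      by_contra hc
      have h1 : a * k ≤ 0 * M := (cdiv_le_iff hM a 0).mp (by omega)
      have h2 : 1 * 1 ≤ a * k := Nat.mul_le_mul ha1 hk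
      omega
    have hj0le : j0 < 2 * k := by
      have h2 : cdiv k M (a + 1) ≤ 2 * k := by
        rw [cdiv_le_iff hM]
        calc (a + 1) * k ≤ (2 * M) * k := Nat.mul_le_mul_right k (by omega)
          _ = 2 * k * M := by ring
      simp only [← hMdef] at *
      omega
    by_cases hc : j0 ≤ k
    · exact Finset.mem_image.mpr ⟨j0, Finset.mem_Icc.mpr ⟨hj01, hc⟩, by rw [hj0]⟩
    · have hj : (j0 - k) ∈ Finset.Icc 1 k := Finset.mem_Icc.mpr ⟨by omega, by omega⟩
      refine Finset.mem_image.mpr ⟨j0 - k, hj, ?_⟩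
      have hkj : k * M ≤ j0 * M := Nat.mul_le_mul_right M (by omega)
      have hval : (j0 - k) * M / k = a - M := by
        rw [Nat.sub_mul, Nat.sub_mul_div _ _ _, hj0]
      have haM : M + 1 ≤ a := by
        rw [← hj0, Nat.le_div_iff_mul_le hk]
        have h1 : (k + 1) * M ≤ j0 * M := Nat.mul_le_mul_right M (by omega)
        have h2 : (M + 1) * k = M * k + k := by ring
        have h3 : (k + 1) * M = k * M + M := by ring
        have h4 : M * k = k * M := mul_comm _ _
        omega
      rw [hval]
      have hsub : a - M + M = a := by omega
      calc ((a - M : ℕ) : ZMod M) = ((a - M : ℕ) : ZMod M) + ((M : ℕ) : ZMod M) := by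
            rw [ZMod.natCast_self]; ring
        _ = ((a - M + M : ℕ) : ZMod M) := by push_cast; ring
        _ = (a : ZMod M) := by rw [hsub]

lemma card_Bstar (N k : ℕ) (hN : 2 ≤ N) (hk : 1 ≤ k) (hkN : k ≤ N - 1) :
    (Bstar N k).card = k := by
  set M := N - 1 with hMdef
  have hM : 1 ≤ M := by omega
  rw [Bstar, Finset.card_image_of_injOn, Nat.card_Icc]
  · omega
  · intro j hj j' hj' heq
    simp only [Finset.coe_Icc, Set.mem_Icc] at hj hj'
    have hcong : j * M / k ≡ j' * M / k [MOD M] :=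
      (ZMod.natCast_eq_natCast_iff _ _ _).mp heq
    have hb1 : 1 ≤ j * M / k := val_ge_one hk hkN hj.1
    have hbM : j * M / k ≤ M := val_le hk hj.2
    have hb1' : 1 ≤ j' * M / k := val_ge_one hk hkN hj'.1
    have hbM' : j' * M / k ≤ M := val_le hk hj'.2
    have heqv : j * M / k = j' * M / k := by
      rcases cong_cases hM hb1' hbM' hb1 (by omega) hcong with h' | h'
      · exact h'
      · omega
    rcases lt_trichotomy j j' with h | h | h
    · exact absurd heqv (Nat.ne_of_lt (val_strictmono hk hkN h))
    · exact h
    · exact absurd heqv.symm (Nat.ne_of_lt (val_strictmono hk hkN h))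

lemma betaCount_Bstar (N k : ℕ) (hN : 2 ≤ N) (hk : 1 ≤ k) (hkN : k ≤ N - 1)
    (i : ℕ) (hi1 : 1 ≤ i) (hiM : i ≤ N - 1) :
    ∀ d, d ≤ N - 1 →
      betaCount N (Bstar N k) i d = cdiv k (N - 1) (i + d) - cdiv k (N - 1) i := by
  set M := N - 1 with hMdef
  have hM : 1 ≤ M := by omega
  intro d
  induction d with
  | zero => intro _; simp [betaCount]
  | succ d ih =>
    intro hd
    rw [betaCount, Finset.card_filter, Finset.sum_range_succ, ← Finset.card_filter,
      ← betaCount, ih (by omega)]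
    have hmono1 : cdiv k M i ≤ cdiv k M (i + d) := cdiv_mono hM (by omega)
    have hmono2 : cdiv k M (i + d) ≤ cdiv k M (i + d + 1) := cdiv_mono hM (by omega)
    have hstep : cdiv k M (i + d + 1) ≤ cdiv k M (i + d) + 1 := cdiv_succ_le hM hkN _
    have hmem := mem_Bstar_iff N k hN hk hkN (i + d) (by omega) (by omega)
    by_cases hc : ((i + d : ℕ) : ZMod (N - 1)) ∈ Bstar N k
    · rw [if_pos hc]
      have := hmem.mp hc
      have hgoal : i + (d + 1) = i + d + 1 := by omega
      rw [hgoal]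
      simp only [← hMdef] at *
      omega
    · rw [if_neg hc]
      have h2 : ¬(cdiv k M (i + d) < cdiv k M (i + d + 1)) := fun hlt => hc (hmem.mpr hlt)
      have hgoal : i + (d + 1) = i + d + 1 := by omega
      rw [hgoal]
      simp only [← hMdef] at *
      omega


lemma sum_Icc_zmod {Mn : ℕ} [NeZero Mn] (f : ZMod Mn → ℕ) :
    ∑ i ∈ Finset.Icc 1 Mn, f ((i : ℕ) : ZMod Mn) = ∑ z : ZMod Mn, f z := by
  have hM : 1 ≤ Mn := Nat.one_le_iff_ne_zero.mpr (NeZero.ne Mn)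
  refine Finset.sum_nbij' (fun i => ((i : ℕ) : ZMod Mn))
    (fun z => if z.val = 0 then Mn else z.val) ?_ ?_ ?_ ?_ ?_
  · intro a _; exact Finset.mem_univ _
  · intro z _
    have := ZMod.val_lt z
    by_cases h : z.val = 0 <;> simp [h, Finset.mem_Icc] <;> omega
  · intro a ha
    obtain ⟨ha1, ha2⟩ := Finset.mem_Icc.mp ha
    rcases eq_or_lt_of_le ha2 with h | h
    · subst h
      simp [ZMod.natCast_self, ZMod.val_zero]
    · rw [ZMod.val_cast_of_lt h, if_neg (by omega)]
  · intro z _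
    by_cases h : z.val = 0
    · rw [if_pos h, ZMod.natCast_self]
      exact ((ZMod.val_eq_zero z).mp h).symm
    · rw [if_neg h]
      exact ZMod.natCast_rightInverse z
  · intro a _; rfl

lemma sum_betaCount (N k : ℕ) (hN : 2 ≤ N) (B : Finset (ZMod (N - 1))) (d : ℕ) :
    ∑ i ∈ Finset.Icc 1 (N - 1), betaCount N B i d = B.card * d := by
  have hM : 1 ≤ N - 1 := by omega
  haveI : NeZero (N - 1) := ⟨by omega⟩
  simp only [betaCount, Finset.card_filter]
  rw [Finset.sum_comm]
  have hone : ∀ t : ℕ, (∑ i ∈ Finset.Icc 1 (N - 1),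
      if (((i + t : ℕ)) : ZMod (N - 1)) ∈ B then 1 else 0) = B.card := by
    intro t
    have hz := sum_Icc_zmod (Mn := N - 1)
      (f := fun z => if z + ((t : ℕ) : ZMod (N - 1)) ∈ B then 1 else 0)
    simp only [Nat.cast_add] at hz ⊢
    rw [hz]
    have he := Fintype.sum_equiv (Equiv.addRight ((t : ℕ) : ZMod (N - 1)))
      (fun z => if z + ((t : ℕ) : ZMod (N - 1)) ∈ B then 1 else 0)
      (fun z => if z ∈ B then 1 else 0) (fun z => rfl)
    rw [he, ← Finset.card_filter, Finset.filter_univ_mem]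
  rw [Finset.sum_congr rfl (fun t _ => hone t), Finset.sum_const, Finset.card_range,
    smul_eq_mul, mul_comm]

lemma chord_aux (x : ℝ) (hx0 : 0 ≤ x) (hx1 : x ≤ 1) (t : ℕ) :
    x ^ t * (1 + (1 - x) * t) ≤ 1 := by
  induction t with
  | zero => simp
  | succ t ih =>
    have hxt : x ^ t ≤ 1 := pow_le_one₀ hx0 hx1
    have hxt0 : 0 ≤ x ^ t := pow_nonneg hx0 t
    have h1 : x * (x ^ t * (1 + (1 - x) * t)) ≤ x * 1 :=
      mul_le_mul_of_nonneg_left ih hx0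
    have h2 : x ^ t * x * (1 - x) ≤ 1 * (1 - x) := by
      apply mul_le_mul_of_nonneg_right _ (by linarith)
      calc x ^ t * x ≤ 1 * 1 := mul_le_mul hxt hx1 hx0 zero_le_one
        _ = 1 := by ring
    rw [pow_succ]
    push_cast
    nlinarith [h1, h2]

lemma chord (x : ℝ) (hx0 : 0 ≤ x) (hx1 : x ≤ 1) (m n : ℕ) :
    x ^ m + (x ^ (m + 1) - x ^ m) * ((n : ℝ) - (m : ℝ)) ≤ x ^ n := by
  rcases le_or_gt m n with h | h
  · obtain ⟨t, rfl⟩ := Nat.exists_eq_add_of_le h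
    have hb : 1 + (t : ℝ) * (x - 1) ≤ x ^ t := by
      have h1 := one_add_mul_le_pow (a := x - 1) (by linarith) t
      rw [show (1 : ℝ) + (x - 1) = x by ring] at h1
      exact h1
    have hxm : 0 ≤ x ^ m := pow_nonneg hx0 m
    have h2 : x ^ m * (1 + (t : ℝ) * (x - 1)) ≤ x ^ m * x ^ t :=
      mul_le_mul_of_nonneg_left hb hxm
    calc x ^ m + (x ^ (m + 1) - x ^ m) * (((m + t : ℕ) : ℝ) - (m : ℝ))
        = x ^ m * (1 + (t : ℝ) * (x - 1)) := by push_cast; ring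
      _ ≤ x ^ m * x ^ t := h2
      _ = x ^ (m + t) := (pow_add x m t).symm
  · obtain ⟨t, rfl⟩ := Nat.exists_eq_add_of_lt h
    have hc := chord_aux x hx0 hx1 (t + 1)
    push_cast at hc
    have hxn : 0 ≤ x ^ n := pow_nonneg hx0 n
    have h2 : x ^ n * (x ^ (t + 1) * (1 + (1 - x) * ((t : ℝ) + 1))) ≤ x ^ n * 1 :=
      mul_le_mul_of_nonneg_left hc hxn
    calc x ^ (n + t + 1) + (x ^ (n + t + 1 + 1) - x ^ (n + t + 1)) * ((n : ℝ) - ((n + t + 1 : ℕ) : ℝ))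
        = x ^ n * (x ^ (t + 1) * (1 + (1 - x) * ((t : ℝ) + 1))) := by push_cast; ring
      _ ≤ x ^ n * 1 := h2
      _ = x ^ n := mul_one _

end EqSp

theorem equally_spaced_minimizes_Stilde (N k : ℕ) (hN : 2 ≤ N)
    (hk : 1 ≤ k) (hkN : k ≤ N - 1) (α β : ℝ) (hβ : 0 ≤ β) (hβα : β < α) (hα : α < 1) :
    ∀ B : Finset (ZMod (N - 1)), B.card = k →
      Stilde N α β ((Finset.Icc 1 k).image fun i => ((i * (N - 1) / k : ℕ) : ZMod (N - 1)))
        ≤ Stilde N α β B := by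
  intro B hB
  have hM : 1 ≤ N - 1 := by omega
  have hα0 : 0 < α := lt_of_le_of_lt hβ hβα
  have hx0 : 0 ≤ β / α := div_nonneg hβ hα0.le
  have hx1 : β / α ≤ 1 := by rw [div_le_one hα0]; linarith
  have hcard : (Finset.Icc 1 (N - 1)).card = N - 1 := by rw [Nat.card_Icc]; omega
  show Stilde N α β (EqSp.Bstar N k) ≤ Stilde N α β B
  rw [Stilde, Stilde]
  apply Finset.sum_le_sum
  intro d hd
  obtain ⟨hd1, hdM⟩ := Finset.mem_Icc.mp hd
  obtain ⟨m, hm⟩ : ∃ m, m = d * k / (N - 1) := ⟨_, rfl⟩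
  have key2 : ∀ C : Finset (ZMod (N - 1)), C.card = k →
      ∑ i ∈ Finset.Icc 1 (N - 1),
        ((β / α) ^ m + ((β / α) ^ (m + 1) - (β / α) ^ m)
          * ((betaCount N C i d : ℝ) - (m : ℝ)))
      = ((N - 1 : ℕ) : ℝ) * (β / α) ^ m
        + ((β / α) ^ (m + 1) - (β / α) ^ m)
          * ((k : ℝ) * (d : ℝ) - ((N - 1 : ℕ) : ℝ) * (m : ℝ)) := by
    intro C hC
    have hs : ∑ i ∈ Finset.Icc 1 (N - 1), ((betaCount N C i d : ℝ))
        = (k : ℝ) * (d : ℝ) := by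
      rw [← Nat.cast_sum, EqSp.sum_betaCount N k hN C d, hC]
      push_cast; ring
    rw [Finset.sum_add_distrib, Finset.sum_const, ← Finset.mul_sum,
      Finset.sum_sub_distrib, hs, Finset.sum_const, hcard, nsmul_eq_mul, nsmul_eq_mul]
  have key1 : ∀ i ∈ Finset.Icc 1 (N - 1),
      (β / α) ^ betaCount N (EqSp.Bstar N k) i d
        = (β / α) ^ m + ((β / α) ^ (m + 1) - (β / α) ^ m)
            * ((betaCount N (EqSp.Bstar N k) i d : ℝ) - (m : ℝ)) := by
    intro i hi
    obtain ⟨hi1, hiM⟩ := Finset.mem_Icc.mp hi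
    have hbc := EqSp.betaCount_Bstar N k hN hk hkN i hi1 hiM d hdM
    have h1 := EqSp.le_cdiv_add (k := k) (M := N - 1) hM i d
    have h2 := EqSp.cdiv_le_div_succ (k := k) (M := N - 1) hM d
    have h3 := EqSp.cdiv_add_le (k := k) (M := N - 1) hM i d
    have h4 := EqSp.cdiv_mono (k := k) (M := N - 1) hM (show i ≤ i + d by omega)
    rw [← hm] at h1 h2
    have hcases : betaCount N (EqSp.Bstar N k) i d = m
        ∨ betaCount N (EqSp.Bstar N k) i d = m + 1 := by omega
    rcases hcases with h | h
    · rw [h]; push_cast; ring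
    · rw [h]; push_cast; ring
  rw [← Finset.sum_mul, ← Finset.sum_mul]
  apply mul_le_mul_of_nonneg_right _ (pow_nonneg hα0.le d)
  calc ∑ i ∈ Finset.Icc 1 (N - 1), (β / α) ^ betaCount N (EqSp.Bstar N k) i d
      = ∑ i ∈ Finset.Icc 1 (N - 1),
          ((β / α) ^ m + ((β / α) ^ (m + 1) - (β / α) ^ m)
            * ((betaCount N (EqSp.Bstar N k) i d : ℝ) - (m : ℝ))) :=
        Finset.sum_congr rfl key1
    _ = ((N - 1 : ℕ) : ℝ) * (β / α) ^ m
        + ((β / α) ^ (m + 1) - (β / α) ^ m)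
          * ((k : ℝ) * (d : ℝ) - ((N - 1 : ℕ) : ℝ) * (m : ℝ)) :=
        key2 (EqSp.Bstar N k) (EqSp.card_Bstar N k hN hk hkN)
    _ = ∑ i ∈ Finset.Icc 1 (N - 1),
          ((β / α) ^ m + ((β / α) ^ (m + 1) - (β / α) ^ m)
            * ((betaCount N B i d : ℝ) - (m : ℝ))) := (key2 B hB).symm
    _ ≤ ∑ i ∈ Finset.Icc 1 (N - 1), (β / α) ^ betaCount N B i d :=
        Finset.sum_le_sum fun i _ => EqSp.chord (β / α) hx0 hx1 m _
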